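/- Let n ≥ 1, let A ∈ Matrix (Fin n) (Fin n) ℂ be skew-Hermitian (Aᴴ = −A) with n distinct eigenvalues, and let X₀ be skew-Hermitian with X₀·A = A·X₀. If X is skew-Hermitian and det(X + λ·A − μ·1) = det(X₀ + λ·A − μ·1) for all λ, μ ∈ ℂ, then X = X₀. -/

import Mathlib

open Matrix

open Polynomial Finset

noncomputable def pmat {n : ℕ} (m : Matrix (Fin n) (Fin n) ℂ) (c : Fin n → ℂ) :
    Matrix (Fin n) (Fin n) ℂ[X] :=
  Matrix.of fun k i => C (m k i) + C (Matrix.diagonal c k i) * X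

lemma pmat_eval {n : ℕ} (m : Matrix (Fin n) (Fin n) ℂ) (c : Fin n → ℂ) (z : ℂ) :
    Polynomial.eval z (pmat m c).det = (m + z • Matrix.diagonal c).det := by
  rw [← Polynomial.coe_evalRingHom, RingHom.map_det]
  congr 1
  ext k i
  simp only [RingHom.mapMatrix_apply, pmat, Matrix.map_apply, Matrix.of_apply, Matrix.add_apply, Matrix.smul_apply,
    coe_evalRingHom, eval_add, eval_mul, eval_C, eval_X, smul_eq_mul]
  ring

lemma pmat_term_deg {n : ℕ} (m : Matrix (Fin n) (Fin n) ℂ) (c : Fin n → ℂ)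
    (σ : Equiv.Perm (Fin n)) :
    (∏ i, pmat m c (σ i) i).natDegree ≤ (Finset.univ.filter fun i => σ i = i).card := by
  refine le_trans (Polynomial.natDegree_prod_le _ _) ?_
  rw [Finset.card_filter]
  apply Finset.sum_le_sum
  intro i _
  by_cases h : σ i = i
  · rw [if_pos h]
    refine le_trans (natDegree_add_le _ _) ?_
    simp only [natDegree_C, max_le_iff]
    exact ⟨(natDegree_C _).trans_le (Nat.zero_le _), le_trans (natDegree_mul_le) (by simp)⟩
  · rw [if_neg h]
    simp [pmat, Matrix.diagonal_apply_ne _ h]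

lemma pmat_term_coeff_zero {n : ℕ} (m : Matrix (Fin n) (Fin n) ℂ) (c : Fin n → ℂ)
    (σ : Equiv.Perm (Fin n)) {k : ℕ} (hk : (Finset.univ.filter fun i => σ i = i).card < k) :
    (∏ i, pmat m c (σ i) i).coeff k = 0 :=
  Polynomial.coeff_eq_zero_of_natDegree_lt (lt_of_le_of_lt (pmat_term_deg m c σ) hk)

lemma fixed_card {n : ℕ} (σ : Equiv.Perm (Fin n)) :
    (Finset.univ.filter fun i => σ i = i).card = n - σ.support.card := by
  have : (Finset.univ.filter fun i => σ i = i) = σ.supportᶜ := by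
    ext i
    simp [Equiv.Perm.mem_support]
  rw [this, Finset.card_compl, Fintype.card_fin]

lemma pmat_coeff_top {n : ℕ} (m : Matrix (Fin n) (Fin n) ℂ) (c : Fin n → ℂ)
    (j : Fin n) (hcj : c j = 0) :
    (pmat m c).det.coeff (n - 1) = m j j * ∏ i ∈ Finset.univ.erase j, c i := by
  rw [Matrix.det_apply, Polynomial.finset_sum_coeff]
  rw [← Finset.sum_subset (Finset.subset_univ ({1} : Finset (Equiv.Perm (Fin n))))]
  · rw [Finset.sum_singleton]
    simp only [Equiv.Perm.sign_one, one_smul, Equiv.Perm.one_apply]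
    rw [← Finset.mul_prod_erase Finset.univ _ (Finset.mem_univ j)]
    have hj : pmat m c j j = C (m j j) := by
      simp [pmat, Matrix.diagonal_apply_eq, hcj]
    rw [hj, coeff_C_mul]
    have hcard : (Finset.univ.erase j).card * 1 = n - 1 := by
      rw [mul_one, Finset.card_erase_of_mem (Finset.mem_univ j), Finset.card_univ,
        Fintype.card_fin]
    rw [← hcard, Polynomial.coeff_prod_of_natDegree_le]
    · congr 1
      apply Finset.prod_congr rfl
      intro i hi
      simp [pmat, Matrix.diagonal_apply_eq, coeff_C]
    · intro p _
      simp only [pmat, Matrix.of_apply, Matrix.diagonal_apply_eq]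
      refine le_trans (natDegree_add_le _ _) ?_
      simp only [natDegree_C, max_le_iff]
      exact ⟨Nat.zero_le _, le_trans (natDegree_mul_le) (by simp)⟩
  · intro σ _ hσ
    have hσ1 : σ ≠ 1 := by simpa using hσ
    rw [Polynomial.coeff_smul, pmat_term_coeff_zero, smul_zero]
    rw [fixed_card]
    have h2 : 2 ≤ σ.support.card := by
      by_contra h
      exact hσ1 (Equiv.Perm.card_support_le_one.mp (by omega))
    have hn : σ.support.card ≤ n := by
      simpa using Finset.card_le_card (Finset.subset_univ σ.support)
    omega

lemma pmat_coeff_sub {n : ℕ} (m : Matrix (Fin n) (Fin n) ℂ) (c : Fin n → ℂ)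
    (j : Fin n) (hcj : c j = 0) (hmj : m j j = 0) :
    (pmat m c).det.coeff (n - 2) =
      - ∑ l ∈ Finset.univ.erase j,
          m l j * (m j l * ∏ i ∈ (Finset.univ.erase j).erase l, c i) := by
  classical
  rw [Matrix.det_apply, Polynomial.finset_sum_coeff]
  have hPjj : pmat m c j j = 0 := by
    simp [pmat, Matrix.diagonal_apply_eq, hcj, hmj]
  rw [← Finset.sum_subset (Finset.subset_univ
      ((Finset.univ.erase j).image fun l => Equiv.swap j l))]
  · rw [Finset.sum_image (by
      intro x hx y hy h
      have := congrArg (fun e => e j) h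
      simpa [Equiv.swap_apply_left] using this)]
    rw [← Finset.sum_neg_distrib]
    apply Finset.sum_congr rfl
    intro l hl
    have hlj : l ≠ j := Finset.ne_of_mem_erase hl
    have hsign : Equiv.Perm.sign (Equiv.swap j l) = -1 :=
      Equiv.Perm.sign_swap (Ne.symm hlj)
    rw [hsign]
    rw [← Finset.mul_prod_erase Finset.univ _ (Finset.mem_univ j),
      ← Finset.mul_prod_erase (Finset.univ.erase j) _ hl]
    have h1 : pmat m c (Equiv.swap j l j) j = C (m l j) := by
      rw [Equiv.swap_apply_left]
      simp [pmat, Matrix.diagonal_apply_ne _ hlj]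
    have h2 : pmat m c (Equiv.swap j l l) l = C (m j l) := by
      rw [Equiv.swap_apply_right]
      simp [pmat, Matrix.diagonal_apply_ne _ (Ne.symm hlj)]
    rw [h1, h2]
    have hrest : ∀ i ∈ (Finset.univ.erase j).erase l,
        pmat m c (Equiv.swap j l i) i = C (m i i) + C (c i) * X := by
      intro i hi
      have hij : i ≠ j := Finset.ne_of_mem_erase (Finset.mem_of_mem_erase hi)
      have hil : i ≠ l := Finset.ne_of_mem_erase hi
      rw [Equiv.swap_apply_of_ne_of_ne hij hil]
      simp [pmat, Matrix.diagonal_apply_eq]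
    rw [Finset.prod_congr rfl hrest]
    have hcard : ((Finset.univ.erase j).erase l).card * 1 = n - 2 := by
      rw [mul_one, Finset.card_erase_of_mem hl,
        Finset.card_erase_of_mem (Finset.mem_univ j), Finset.card_univ, Fintype.card_fin]
      omega
    rw [Units.smul_def]
    simp only [coeff_smul, coeff_C_mul]
    rw [← hcard, Polynomial.coeff_prod_of_natDegree_le]
    · have : ∏ i ∈ (Finset.univ.erase j).erase l, (C (m i i) + C (c i) * X).coeff 1
          = ∏ i ∈ (Finset.univ.erase j).erase l, c i := by
        apply Finset.prod_congr rfl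
        intro i hi
        simp [coeff_C]
      rw [this]
      simp
    · intro p _
      refine le_trans (natDegree_add_le _ _) ?_
      simp only [natDegree_C, max_le_iff]
      exact ⟨Nat.zero_le _, le_trans (natDegree_mul_le) (by simp)⟩
  · intro σ _ hσ
    by_cases hj : σ j = j
    · rw [Polynomial.coeff_smul]
      rw [Finset.prod_eq_zero (Finset.mem_univ j)]
      · simp
      · rw [hj, hPjj]
    · have hσ1 : σ ≠ 1 := by
        intro h; exact hj (by simp [h])
      have h2 : 2 ≤ σ.support.card := by
        by_contra h
        exact hσ1 (Equiv.Perm.card_support_le_one.mp (by omega))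
      rcases eq_or_lt_of_le h2 with h2' | h3
      · -- σ is a swap
        obtain ⟨p, q, hpq, hσs⟩ := Equiv.Perm.card_support_eq_two.mp h2'.symm
        exfalso
        apply hσ
        have hjpq : j = p ∨ j = q := by
          by_contra h
          push_neg at h
          exact hj (by rw [hσs, Equiv.swap_apply_of_ne_of_ne h.1 h.2])
        refine Finset.mem_image.mpr ?_
        rcases hjpq with rfl | rfl
        · exact ⟨q, Finset.mem_erase.mpr ⟨Ne.symm hpq, Finset.mem_univ q⟩, hσs.symm⟩
        · exact ⟨p, Finset.mem_erase.mpr ⟨hpq, Finset.mem_univ p⟩,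
            by rw [hσs, Equiv.swap_comm]⟩
      · rw [Polynomial.coeff_smul, pmat_term_coeff_zero, smul_zero]
        rw [fixed_card]
        have hn : σ.support.card ≤ n := by
          simpa using Finset.card_le_card (Finset.subset_univ σ.support)
        omega

/-- Isospectral rigidity for pencils `X + λA` with `A` skew-Hermitian of
simple spectrum and `X₀` skew-Hermitian commuting with `A`: a skew-Hermitian `X`
isospectral with `X₀` equals `X₀`. -/
theorem statement9 (n : ℕ) (hn : 1 ≤ n)
    (A X₀ X : Matrix (Fin n) (Fin n) ℂ)
    (hA : Aᴴ = -A)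
    (hsimple : ∃ μs : Fin n → ℂ, Function.Injective μs ∧
      A.charpoly = ∏ i : Fin n, (Polynomial.X - Polynomial.C (μs i)))
    (hX₀ : X₀ᴴ = -X₀) (hcomm : X₀ * A = A * X₀)
    (hX : Xᴴ = -X)
    (hiso : ∀ lam μ : ℂ, (X + lam • A - μ • 1).det = (X₀ + lam • A - μ • 1).det) :
    X = X₀ := by
  classical
  obtain ⟨μs, hμinj, hμchar⟩ := hsimple
  have hB : (Complex.I • A).IsHermitian := by
    unfold Matrix.IsHermitian
    rw [conjTranspose_smul, hA]
    simp [Complex.conj_I]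
  set U : Matrix (Fin n) (Fin n) ℂ := (hB.eigenvectorUnitary : Matrix (Fin n) (Fin n) ℂ) with hUdef
  set t : Fin n → ℝ := hB.eigenvalues with htdef
  have hUU : star U * U = 1 := mem_unitaryGroup_iff'.mp hB.eigenvectorUnitary.2
  have hUU' : U * star U = 1 := mem_unitaryGroup_iff.mp hB.eigenvectorUnitary.2
  set a : Fin n → ℂ := fun i => - Complex.I * (t i : ℂ) with ha
  have hspec : Complex.I • A = U * Matrix.diagonal (fun i => (t i : ℂ)) * star U :=
    hB.spectral_theorem
  have hsand : ∀ M : Matrix (Fin n) (Fin n) ℂ,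
      star U * (U * M * star U) * U = M := by
    intro M
    calc star U * (U * M * star U) * U = (star U * U) * M * (star U * U) := by noncomm_ring
    _ = M := by rw [hUU, one_mul, mul_one]
  have h1 : Complex.I • (star U * A * U) = Matrix.diagonal (fun i => (t i : ℂ)) := by
    calc Complex.I • (star U * A * U) = star U * (Complex.I • A) * U := by
          rw [Matrix.mul_smul, Matrix.smul_mul]
    _ = _ := by rw [hspec, hsand]
  have hAdiag : star U * A * U = Matrix.diagonal a := by
    have h2 : (- Complex.I) • (Complex.I • (star U * A * U))
        = (- Complex.I) • Matrix.diagonal (fun i => (t i : ℂ)) := by rw [h1]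
    rw [smul_smul] at h2
    simp only [neg_mul, Complex.I_mul_I, neg_neg, one_smul] at h2
    rw [h2, ← Matrix.diagonal_smul]
    rfl
  -- determinant is invariant under the unitary conjugation
  have hdetU : Matrix.det (star U) * Matrix.det U = 1 := by
    rw [← Matrix.det_mul, hUU, Matrix.det_one]
  have hconj_det : ∀ M : Matrix (Fin n) (Fin n) ℂ, (star U * M * U).det = M.det := by
    intro M
    rw [Matrix.det_mul, Matrix.det_mul]
    calc Matrix.det (star U) * Matrix.det M * Matrix.det U
        = (Matrix.det (star U) * Matrix.det U) * Matrix.det M := by ring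
    _ = M.det := by rw [hdetU, one_mul]
  -- injectivity of eigenvalues
  have hcharA : ∀ z : ℂ, (z • (1 : Matrix (Fin n) (Fin n) ℂ) - A).det = ∏ i, (z - a i) := by
    intro z
    rw [← hconj_det (z • 1 - A)]
    have : star U * (z • (1 : Matrix (Fin n) (Fin n) ℂ) - A) * U
        = Matrix.diagonal (fun i => z - a i) := by
      rw [Matrix.mul_sub, Matrix.sub_mul, Matrix.mul_smul, Matrix.smul_mul, mul_one, hUU, hAdiag]
      ext k i
      by_cases h : k = i
      · subst h; simp [Matrix.diagonal_apply_eq]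
      · simp [Matrix.diagonal_apply_ne _ h, Matrix.one_apply_ne h]
    rw [this, Matrix.det_diagonal]
  have hcharA' : ∀ z : ℂ, (z • (1 : Matrix (Fin n) (Fin n) ℂ) - A).det = ∏ i, (z - μs i) := by
    intro z
    have h1 : Polynomial.eval z A.charpoly = (z • (1 : Matrix (Fin n) (Fin n) ℂ) - A).det := by
      rw [Matrix.charpoly, ← Polynomial.coe_evalRingHom, RingHom.map_det]
      congr 1
      ext k i
      by_cases h : k = i
      · subst h
        simp [Matrix.charmatrix_apply_eq, Matrix.one_apply_eq]
      · simp [Matrix.charmatrix_apply_ne _ _ _ h, Matrix.one_apply_ne h]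
    rw [← h1, hμchar]
    simp [Polynomial.eval_prod]
  have hainj : Function.Injective a := by
    have hpoly : ∏ i, (Polynomial.X - Polynomial.C (a i))
        = ∏ i, (Polynomial.X - Polynomial.C (μs i)) := by
      apply Polynomial.funext
      intro r
      simp only [Polynomial.eval_prod, Polynomial.eval_sub, Polynomial.eval_X,
        Polynomial.eval_C]
      rw [← hcharA r, hcharA' r]
    have hr : (Finset.univ.val.map a) = (Finset.univ.val.map μs) := by
      have h1 := congrArg Polynomial.roots hpoly
      rw [Finset.prod_eq_multiset_prod, Finset.prod_eq_multiset_prod] at h1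
      rw [show (Finset.univ.val.map fun i => Polynomial.X - Polynomial.C (a i))
          = ((Finset.univ.val.map a).map fun r => Polynomial.X - Polynomial.C r) by
        rw [Multiset.map_map]; rfl] at h1
      rw [show (Finset.univ.val.map fun i => Polynomial.X - Polynomial.C (μs i))
          = ((Finset.univ.val.map μs).map fun r => Polynomial.X - Polynomial.C r) by
        rw [Multiset.map_map]; rfl] at h1
      rwa [Polynomial.roots_multiset_prod_X_sub_C, Polynomial.roots_multiset_prod_X_sub_C] at h1
    have hnd : (Finset.univ.val.map a).Nodup := by
      rw [hr]
      exact Multiset.Nodup.map hμinj Finset.univ.nodup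
    intro i l h
    exact Multiset.inj_on_of_nodup_map hnd i (Finset.mem_val.mpr (Finset.mem_univ i))
      l (Finset.mem_val.mpr (Finset.mem_univ l)) h
  have htinj : Function.Injective t := by
    intro i l h
    apply hainj
    rw [ha]
    simp [h]
  -- conjugated matrices
  set X' : Matrix (Fin n) (Fin n) ℂ := star U * X * U with hX'def
  set X₀' : Matrix (Fin n) (Fin n) ℂ := star U * X₀ * U with hX₀'def
  have hXconj : ∀ M : Matrix (Fin n) (Fin n) ℂ, Mᴴ = -M → (star U * M * U)ᴴ = -(star U * M * U) := by
    intro M hM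
    rw [Matrix.conjTranspose_mul, Matrix.conjTranspose_mul, hM,
      Matrix.star_eq_conjTranspose, Matrix.conjTranspose_conjTranspose]
    rw [← Matrix.star_eq_conjTranspose U]
    noncomm_ring
  have hX'skew : X'ᴴ = -X' := hXconj X hX
  have hX₀'skew : X₀'ᴴ = -X₀' := hXconj X₀ hX₀
  -- X₀' is diagonal
  have hcomm' : X₀' * Matrix.diagonal a = Matrix.diagonal a * X₀' := by
    rw [← hAdiag]
    calc (star U * X₀ * U) * (star U * A * U)
        = star U * X₀ * (U * star U) * A * U := by noncomm_ring
    _ = star U * (X₀ * A) * U := by rw [hUU']; noncomm_ring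
    _ = star U * (A * X₀) * U := by rw [hcomm]
    _ = star U * A * (U * star U) * X₀ * U := by rw [hUU']; noncomm_ring
    _ = (star U * A * U) * (star U * X₀ * U) := by noncomm_ring
  have hX₀'diag : ∀ k i : Fin n, k ≠ i → X₀' k i = 0 := by
    intro k i hki
    have h2 := congrFun (congrFun hcomm' k) i
    rw [Matrix.mul_diagonal, Matrix.diagonal_mul] at h2
    have h3 : X₀' k i * (a i - a k) = 0 := by linear_combination h2
    rcases mul_eq_zero.mp h3 with h4 | h4
    · exact h4
    · exact absurd (hainj (by linear_combination h4)) (Ne.symm hki)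
  set x : Fin n → ℂ := fun i => X₀' i i with hx
  -- transformed isospectrality
  have hiso' : ∀ lam μ : ℂ,
      (X' + lam • Matrix.diagonal a - μ • 1).det = (X₀' + lam • Matrix.diagonal a - μ • 1).det := by
    intro lam μ
    have key : ∀ M : Matrix (Fin n) (Fin n) ℂ,
        star U * (M + lam • A - μ • 1) * U = (star U * M * U) + lam • Matrix.diagonal a - μ • 1 := by
      intro M
      rw [Matrix.mul_sub, Matrix.sub_mul, Matrix.mul_add, Matrix.add_mul,
        Matrix.mul_smul, Matrix.smul_mul, Matrix.mul_smul, Matrix.smul_mul,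
        mul_one, hUU, hAdiag]
    rw [← key X, ← key X₀, hconj_det, hconj_det]
    exact hiso lam μ
  have hdet0 : ∀ (j : Fin n) (lam : ℂ),
      ((X' - x j • 1) + lam • Matrix.diagonal (fun i => a i - a j)).det = 0 := by
    intro j lam
    have h2 : X' + lam • Matrix.diagonal a - (x j + lam * a j) • 1
        = (X' - x j • 1) + lam • Matrix.diagonal (fun i => a i - a j) := by
      ext k i
      by_cases h : k = i
      · subst h
        simp only [Matrix.add_apply, Matrix.sub_apply, Matrix.smul_apply,
          Matrix.diagonal_apply_eq, Matrix.one_apply_eq, smul_eq_mul]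
        ring
      · simp [Matrix.add_apply, Matrix.sub_apply, Matrix.smul_apply,
          Matrix.diagonal_apply_ne _ h, Matrix.one_apply_ne h]
    rw [← h2, hiso']
    have h3 : X₀' + lam • Matrix.diagonal a - (x j + lam * a j) • 1
        = Matrix.diagonal (fun i => x i + lam * a i - (x j + lam * a j)) := by
      ext k i
      by_cases h : k = i
      · subst h
        simp only [Matrix.add_apply, Matrix.sub_apply, Matrix.smul_apply,
          Matrix.diagonal_apply_eq, Matrix.one_apply_eq, smul_eq_mul]
        simp only [hx]
        ring
      · simp [Matrix.add_apply, Matrix.sub_apply, Matrix.smul_apply,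
          Matrix.diagonal_apply_ne _ h, Matrix.one_apply_ne h, hX₀'diag k i h]
    rw [h3, Matrix.det_diagonal]
    exact Finset.prod_eq_zero (Finset.mem_univ j) (by ring)
  have hP0 : ∀ j : Fin n, (pmat (X' - x j • 1) (fun i => a i - a j)).det = 0 := by
    intro j
    apply Polynomial.funext
    intro r
    rw [pmat_eval, hdet0 j r]
    simp
  have hstage1 : ∀ j : Fin n, X' j j = x j := by
    intro j
    have h0 := congrArg (fun p => Polynomial.coeff p (n - 1)) (hP0 j)
    simp only [Polynomial.coeff_zero] at h0
    rw [pmat_coeff_top (X' - x j • 1) (fun i => a i - a j) j (by ring)] at h0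
    have hprod : (∏ i ∈ Finset.univ.erase j, (a i - a j)) ≠ 0 := by
      rw [Finset.prod_ne_zero_iff]
      intro i hi
      exact sub_ne_zero.mpr (fun h => (Finset.ne_of_mem_erase hi) (hainj h))
    have h5 : (X' - x j • 1) j j = 0 := by
      rcases mul_eq_zero.mp h0 with h | h
      · exact h
      · exact absurd h hprod
    simp only [Matrix.sub_apply, Matrix.smul_apply, Matrix.one_apply_eq, smul_eq_mul,
      mul_one] at h5
    linear_combination h5
  have hstage2 : ∀ j : Fin n, ∑ l ∈ Finset.univ.erase j,
      X' l j * (X' j l * ∏ i ∈ (Finset.univ.erase j).erase l, (a i - a j)) = 0 := by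
    intro j
    have h0 := congrArg (fun p => Polynomial.coeff p (n - 2)) (hP0 j)
    simp only [Polynomial.coeff_zero] at h0
    rw [pmat_coeff_sub (X' - x j • 1) (fun i => a i - a j) j (by ring) (by
      simp [Matrix.sub_apply, Matrix.smul_apply, Matrix.one_apply_eq, hstage1 j])] at h0
    rw [neg_eq_zero] at h0
    rw [← h0]
    apply Finset.sum_congr rfl
    intro l hl
    have hlj : l ≠ j := Finset.ne_of_mem_erase hl
    rw [Matrix.sub_apply, Matrix.sub_apply, Matrix.smul_apply, Matrix.smul_apply,
      Matrix.one_apply_ne hlj, Matrix.one_apply_ne (Ne.symm hlj)]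
    simp
  have hskew_entry : ∀ j l : Fin n, X' l j = - (starRingEnd ℂ) (X' j l) := by
    intro j l
    have h2 := congrFun (congrFun hX'skew l) j
    rw [Matrix.conjTranspose_apply] at h2
    simp only [Matrix.neg_apply] at h2
    rw [Complex.star_def] at h2
    linear_combination h2
  have hreal : ∀ j : Fin n, ∑ l ∈ Finset.univ.erase j,
      Complex.normSq (X' j l) * ∏ i ∈ (Finset.univ.erase j).erase l, (t i - t j) = 0 := by
    intro j
    have h0 := hstage2 j
    have hterm : ∀ l ∈ Finset.univ.erase j,
        X' l j * (X' j l * ∏ i ∈ (Finset.univ.erase j).erase l, (a i - a j))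
          = (-Complex.I)^(n-2) * (-(((Complex.normSq (X' j l)
              * ∏ i ∈ (Finset.univ.erase j).erase l, (t i - t j) : ℝ)) : ℂ)) := by
      intro l hl
      have hcard : ((Finset.univ.erase j).erase l).card = n - 2 := by
        rw [Finset.card_erase_of_mem hl, Finset.card_erase_of_mem (Finset.mem_univ j),
          Finset.card_univ, Fintype.card_fin]
        omega
      have hprod : ∏ i ∈ (Finset.univ.erase j).erase l, (a i - a j)
          = (-Complex.I)^(n-2)
              * ((∏ i ∈ (Finset.univ.erase j).erase l, (t i - t j) : ℝ) : ℂ) := by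
        rw [← hcard, ← Finset.prod_const (-Complex.I)]
        push_cast
        rw [← Finset.prod_mul_distrib]
        apply Finset.prod_congr rfl
        intro i hi
        simp only [ha]
        ring
      rw [hprod, hskew_entry j l]
      have hmc : (starRingEnd ℂ) (X' j l) * X' j l = (Complex.normSq (X' j l) : ℂ) := by
        rw [mul_comm, Complex.mul_conj]
      rw [Complex.ofReal_mul]
      linear_combination (-((-Complex.I)^(n-2)
        * ((∏ i ∈ (Finset.univ.erase j).erase l, (t i - t j) : ℝ) : ℂ))) * hmc
    rw [Finset.sum_congr rfl hterm, ← Finset.mul_sum] at h0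
    have hI : (-Complex.I)^(n-2) ≠ 0 := by
      apply pow_ne_zero
      simp [Complex.I_ne_zero]
    have h1 := (mul_eq_zero.mp h0).resolve_left hI
    rw [Finset.sum_neg_distrib, neg_eq_zero] at h1
    exact_mod_cast h1
  have hfin : ∀ j : Fin n, ∑ l ∈ Finset.univ.erase j,
      Complex.normSq (X' j l) / (t l - t j) = 0 := by
    intro j
    have hQ : (∏ i ∈ Finset.univ.erase j, (t i - t j)) ≠ 0 := by
      rw [Finset.prod_ne_zero_iff]
      intro i hi
      exact sub_ne_zero.mpr fun h => (Finset.ne_of_mem_erase hi) (htinj h)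
    have h0 := hreal j
    have hterm : ∀ l ∈ Finset.univ.erase j,
        Complex.normSq (X' j l) * ∏ i ∈ (Finset.univ.erase j).erase l, (t i - t j)
          = (∏ i ∈ Finset.univ.erase j, (t i - t j))
              * (Complex.normSq (X' j l) / (t l - t j)) := by
      intro l hl
      have hQl : (∏ i ∈ Finset.univ.erase j, (t i - t j))
          = (t l - t j) * ∏ i ∈ (Finset.univ.erase j).erase l, (t i - t j) :=
        (Finset.mul_prod_erase _ _ hl).symm
      have htl : t l - t j ≠ 0 := sub_ne_zero.mpr fun h => (Finset.ne_of_mem_erase hl) (htinj h)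
      rw [hQl]
      field_simp
    rw [Finset.sum_congr rfl hterm, ← Finset.mul_sum] at h0
    exact (mul_eq_zero.mp h0).resolve_left hQ
  have hkey : ∀ j : Fin n, (∀ k : Fin n, t j < t k → ∀ l : Fin n, l ≠ k → X' k l = 0) →
      ∀ l : Fin n, l ≠ j → X' j l = 0 := by
    intro j ih l hlj
    have h0 := hfin j
    have hnonpos : ∀ l' ∈ Finset.univ.erase j,
        Complex.normSq (X' j l') / (t l' - t j) ≤ 0 := by
      intro l' hl'
      have hne : t l' ≠ t j := fun h => (Finset.ne_of_mem_erase hl') (htinj h)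
      rcases lt_or_gt_of_ne hne with hlt | hgt
      · apply div_nonpos_of_nonneg_of_nonpos (Complex.normSq_nonneg _)
        linarith
      · have hz : X' j l' = 0 := by
          have h2 := ih l' hgt j (Ne.symm (Finset.ne_of_mem_erase hl'))
          rw [hskew_entry l' j, h2]
          simp
        rw [hz]
        simp
    have heach := (Finset.sum_eq_zero_iff_of_nonpos hnonpos).mp h0
    by_cases hc : t j < t l
    · have h2 := ih l hc j (Ne.symm hlj)
      rw [hskew_entry l j, h2]
      simp
    · have hl' : l ∈ Finset.univ.erase j := Finset.mem_erase.mpr ⟨hlj, Finset.mem_univ l⟩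
      have h3 := heach l hl'
      have hne : t l - t j ≠ 0 := sub_ne_zero.mpr fun h => hlj (htinj h)
      rcases div_eq_zero_iff.mp h3 with h4 | h4
      · exact Complex.normSq_eq_zero.mp h4
      · exact absurd h4 hne
  have hoff : ∀ j l : Fin n, l ≠ j → X' j l = 0 := by
    have hstep : ∀ N : ℕ, ∀ j : Fin n, (Finset.univ.filter fun k => t j < t k).card ≤ N →
        ∀ l : Fin n, l ≠ j → X' j l = 0 := by
      intro N
      induction N with
      | zero =>
        intro j hj
        apply hkey
        intro k hk
        exfalso
        have hm : k ∈ Finset.univ.filter fun k' => t j < t k' := by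
          simp [hk]
        have := Finset.card_pos.mpr ⟨k, hm⟩
        omega
      | succ N ihN =>
        intro j hj
        apply hkey
        intro k hk l hl
        apply ihN k ?_ l hl
        have hsub : (Finset.univ.filter fun k' => t k < t k')
            ⊆ (Finset.univ.filter fun k' => t j < t k') := by
          intro y hy
          simp only [Finset.mem_filter, Finset.mem_univ, true_and] at hy ⊢
          linarith
        have hss : (Finset.univ.filter fun k' => t k < t k')
            ⊂ (Finset.univ.filter fun k' => t j < t k') := by
          rw [Finset.ssubset_iff_of_subset hsub]
          refine ⟨k, ?_, ?_⟩
          · simp [hk]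
          · simp
        have := Finset.card_lt_card hss
        omega
    intro j l
    exact hstep (Finset.univ.filter fun k => t j < t k).card j le_rfl l
  have hX'eq : X' = X₀' := by
    ext k i
    by_cases h : k = i
    · subst h
      rw [hstage1 k]
    · rw [hoff k i (Ne.symm h), hX₀'diag k i h]
  have hfinal : U * (star U * X * U) * star U = U * (star U * X₀ * U) * star U := by
    rw [← hX'def, ← hX₀'def, hX'eq]
  calc X = U * (star U * X * U) * star U := by
        rw [show U * (star U * X * U) * star U = (U * star U) * X * (U * star U) by
          noncomm_ring, hUU', one_mul, mul_one]
  _ = U * (star U * X₀ * U) * star U := hfinal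
  _ = X₀ := by
        rw [show U * (star U * X₀ * U) * star U = (U * star U) * X₀ * (U * star U) by
          noncomm_ring, hUU', one_mul, mul_one]
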